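/- Let Q = (y_{A_1}^{r_1}, …, y_{A_h}^{r_h}) be an irreducible primary monomial ideal in S_[q] with distinct nonempty A_1,…,A_h ⊆ [q] and r_i > 0, and let I be an ideal minimally generated by square-free monomials with associated map ψ_I. If θ_I(A_i) ≠ ∅ for all i, then the ideal generated by ψ_I(Q) equals the intersection over all tuples (k_1,…,k_h) with x_{k_i} ∈ θ_I(A_i) of the ideals (x_{k_1}^{r_1}, …, x_{k_h}^{r_h}), and this is an irredundant irreducible decomposition. -/

import Mathlib

open MvPolynomial

/-- Index type: nonempty subsets of `[q]`. -/
abbrev EIdx (q : ℕ) := {A : Finset (Fin q) // A.Nonempty}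

/-- `θ_I(A)`, where the square-free monomial `m_j` is recorded by its support `S j`. -/
def thetaSet {n q : ℕ} (S : Fin q → Finset (Fin n)) (A : Finset (Fin q)) :
    Finset (Fin n) :=
  A.inf S \ Aᶜ.sup S

/-- The ring homomorphism `ψ_I : S_[q] → R`, `y_A ↦ ∏_{x ∈ θ_I(A)} x`. -/
noncomputable def psiI (k : Type*) [Field k] {n q : ℕ}
    (S : Fin q → Finset (Fin n)) :
    MvPolynomial (EIdx q) k →+* MvPolynomial (Fin n) k :=
  (aeval fun A : EIdx q => ∏ x ∈ thetaSet S A.1, X x).toRingHom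

lemma thetaSet_disjoint {n q : ℕ} (S : Fin q → Finset (Fin n))
    {A B : Finset (Fin q)} (hAB : A ≠ B) :
    Disjoint (thetaSet S A) (thetaSet S B) := by
  classical
  rw [Finset.disjoint_left]
  intro x hxA hxB
  simp only [thetaSet, Finset.mem_sdiff, Finset.mem_sup] at hxA hxB
  have hmemA : ∀ a ∈ A, x ∈ S a := fun a ha => Finset.mem_of_subset (Finset.inf_le ha) hxA.1
  have hmemB : ∀ a ∈ B, x ∈ S a := fun a ha => Finset.mem_of_subset (Finset.inf_le ha) hxB.1
  have hnA : ∀ a, a ∉ A → x ∉ S a := fun a ha hx =>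
    hxA.2 ⟨a, Finset.mem_compl.mpr ha, hx⟩
  have hnB : ∀ a, a ∉ B → x ∉ S a := fun a ha hx =>
    hxB.2 ⟨a, Finset.mem_compl.mpr ha, hx⟩
  apply hAB
  ext a
  constructor
  · intro ha; by_contra hb; exact hnB a hb (hmemA a ha)
  · intro hb; by_contra ha; exact hnA a ha (hmemB a hb)

lemma prod_monomial_one {σ ι R : Type*} [CommSemiring R] (s : Finset ι) (f : ι → (σ →₀ ℕ)) :
    ∏ i ∈ s, (monomial (f i) 1 : MvPolynomial σ R) = monomial (∑ i ∈ s, f i) 1 := by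
  classical
  induction s using Finset.induction with
  | empty => simp
  | insert _ _ hni ih =>
      rw [Finset.prod_insert hni, Finset.sum_insert hni, ih, monomial_mul, one_mul]

theorem stmt11 (k : Type*) [Field k] (n q h : ℕ)
    (S : Fin q → Finset (Fin n))
    (m : Fin q → MvPolynomial (Fin n) k)
    (hm : ∀ j, m j = ∏ x ∈ S j, X x)
    (I : Ideal (MvPolynomial (Fin n) k))
    (hI : I = Ideal.span (Set.range m))
    (hminI : ∀ i j : Fin q, i ≠ j → ¬ m i ∣ m j)
    (A : Fin h → EIdx q) (hAinj : Function.Injective A)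
    (rr : Fin h → ℕ) (hrr : ∀ i, 0 < rr i)
    (hth : ∀ i, (thetaSet S (A i).1).Nonempty)
    -- the irreducible primary monomial ideal `Q = (y_{A_1}^{r_1}, …, y_{A_h}^{r_h})`
    (Q : Ideal (MvPolynomial (EIdx q) k))
    (hQ : Q = Ideal.span (Set.range fun i : Fin h => (X (A i)) ^ rr i)) :
    -- `ψ_I(Q)` is the intersection of the ideals `(x_{k_1}^{r_1}, …, x_{k_h}^{r_h})`
    Ideal.map (psiI k S) Q =
      (⨅ kk : {f : Fin h → Fin n // ∀ i, f i ∈ thetaSet S (A i).1},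
        Ideal.span (Set.range fun i : Fin h =>
          (X (kk.1 i) : MvPolynomial (Fin n) k) ^ rr i)) ∧
    -- and this decomposition is irredundant
    (∀ kk : {f : Fin h → Fin n // ∀ i, f i ∈ thetaSet S (A i).1},
      ¬ ((⨅ kk' : {f : Fin h → Fin n // ∀ i, f i ∈ thetaSet S (A i).1},
            ⨅ _ : kk' ≠ kk,
            Ideal.span (Set.range fun i : Fin h =>
              (X (kk'.1 i) : MvPolynomial (Fin n) k) ^ rr i)) ≤
          Ideal.span (Set.range fun i : Fin h =>
            (X (kk.1 i) : MvPolynomial (Fin n) k) ^ rr i))) := by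
  classical
  set θ : Fin h → Finset (Fin n) := fun i => thetaSet S (A i).1 with hθ
  have hdisj : ∀ i j : Fin h, i ≠ j → Disjoint (θ i) (θ j) := by
    intro i j hij
    exact thetaSet_disjoint S (fun hh => hij (hAinj (Subtype.ext hh)))
  set d : Fin h → (Fin n →₀ ℕ) := fun i => ∑ x ∈ θ i, Finsupp.single x (rr i) with hdd
  have hdapp : ∀ i x, d i x = if x ∈ θ i then rr i else 0 := by
    intro i x
    rw [hdd]
    rw [Finset.sum_apply']
    simp [Finsupp.single_apply, Finset.sum_ite_eq' (θ i) x fun _ => rr i]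
  -- the generators of the image ideal
  have hgen : ∀ i, (psiI k S) (X (A i) ^ rr i) = monomial (d i) (1 : k) := by
    intro i
    have h1 : (psiI k S) (X (A i)) = monomial (∑ x ∈ θ i, Finsupp.single x 1) 1 := by
      simp only [psiI, AlgHom.toRingHom_eq_coe, RingHom.coe_coe, aeval_X]
      rw [show (∏ x ∈ thetaSet S (A i).1, (X x : MvPolynomial (Fin n) k)) =
          ∏ x ∈ θ i, monomial (Finsupp.single x 1) 1 from
        Finset.prod_congr rfl fun x _ => by rw [← X_pow_eq_monomial, pow_one]]
      exact prod_monomial_one _ _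
    rw [map_pow, h1, monomial_pow, one_pow, Finset.smul_sum]
    refine congrArg (fun s => monomial s (1 : k)) ?_
    exact Finset.sum_congr rfl fun x _ => by
      rw [Finsupp.smul_single, smul_eq_mul, mul_one]
  have hmap : Ideal.map (psiI k S) Q =
      Ideal.span ((fun e => monomial e (1 : k)) '' Set.range d) := by
    rw [hQ, Ideal.map_span, ← Set.range_comp, ← Set.range_comp]
    congr 1
    ext p
    simp only [Set.mem_range, Function.comp]
    exact exists_congr fun i => by rw [hgen i]
  have hJ : ∀ f : Fin h → Fin n,
      Ideal.span (Set.range fun i : Fin h => (X (f i) : MvPolynomial (Fin n) k) ^ rr i) =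
      Ideal.span ((fun e => monomial e (1 : k)) ''
        Set.range fun i => Finsupp.single (f i) (rr i)) := by
    intro f
    rw [← Set.range_comp]
    congr 1
    ext p
    simp only [Set.mem_range, Function.comp]
    exact exists_congr fun i => by rw [X_pow_eq_monomial]
  have hdle : ∀ i (e : Fin n →₀ ℕ), d i ≤ e ↔ ∀ x ∈ θ i, rr i ≤ e x := by
    intro i e
    rw [Finsupp.le_def]
    constructor
    · intro hle x hx
      have := hle x
      rwa [hdapp, if_pos hx] at this
    · intro hle x
      rw [hdapp]
      split
      · exact hle x ‹_›
      · exact Nat.zero_le _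
  constructor
  · rw [hmap]
    ext p
    rw [mem_ideal_span_monomial_image, Submodule.mem_iInf]
    simp only [hJ, mem_ideal_span_monomial_image, Set.mem_range,
      exists_exists_eq_and]
    constructor
    · intro hp kk e he
      obtain ⟨i, hi⟩ := hp e he
      exact ⟨i, Finsupp.single_le_iff.mpr ((hdle i e).mp hi _ (kk.2 i))⟩
    · intro hp e he
      by_contra hno
      push_neg at hno
      have hch : ∀ i, ∃ x ∈ θ i, e x < rr i := by
        intro i
        by_contra hc
        push_neg at hc
        exact hno i ((hdle i e).mpr hc)
      choose f hf1 hf2 using hch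
      obtain ⟨i, hi⟩ := hp ⟨f, hf1⟩ e he
      rw [Finsupp.single_le_iff] at hi
      exact absurd hi (not_le.mpr (hf2 i))
  · intro kk hle
    set w : Fin n →₀ ℕ := ∑ i, (d i - Finsupp.single (kk.1 i) 1) with hw
    have hwapp : ∀ x, w x = ∑ i, (d i x - (Finsupp.single (kk.1 i) 1 : Fin n →₀ ℕ) x) := by
      intro x
      rw [hw, Finset.sum_apply']
      exact Finset.sum_congr rfl fun i _ => Finsupp.tsub_apply _ _ _
    -- membership in all other components
    have hmem : monomial w (1 : k) ∈
        ⨅ kk' : {f : Fin h → Fin n // ∀ i, f i ∈ thetaSet S (A i).1},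
          ⨅ _ : kk' ≠ kk,
          Ideal.span (Set.range fun i : Fin h =>
            (X (kk'.1 i) : MvPolynomial (Fin n) k) ^ rr i) := by
      rw [Submodule.mem_iInf]
      intro kk'
      rw [Submodule.mem_iInf]
      intro hne
      rw [hJ, mem_ideal_span_monomial_image]
      intro e he
      rw [support_monomial, if_neg one_ne_zero, Finset.mem_singleton] at he
      subst he
      have : ∃ i, kk'.1 i ≠ kk.1 i := by
        by_contra hc
        push_neg at hc
        exact hne (Subtype.ext (funext hc))
      obtain ⟨i, hi⟩ := this
      refine ⟨Finsupp.single (kk'.1 i) (rr i), ⟨i, rfl⟩, Finsupp.single_le_iff.mpr ?_⟩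
      rw [hwapp]
      calc rr i = d i (kk'.1 i) - (Finsupp.single (kk.1 i) 1 : Fin n →₀ ℕ) (kk'.1 i) := by
              rw [hdapp, if_pos (kk'.2 i), Finsupp.single_apply, if_neg (fun hh => hi hh.symm)]
              omega
        _ ≤ _ := Finset.single_le_sum (f := fun j => d j (kk'.1 i) -
              (Finsupp.single (kk.1 j) 1 : Fin n →₀ ℕ) (kk'.1 i))
              (fun j _ => Nat.zero_le _) (Finset.mem_univ i)
    have hnotmem : monomial w (1 : k) ∉
        Ideal.span (Set.range fun i : Fin h =>
          (X (kk.1 i) : MvPolynomial (Fin n) k) ^ rr i) := by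
      rw [hJ, mem_ideal_span_monomial_image]
      intro hc
      have hw' : w ∈ (monomial w (1 : k)).support := by
        rw [support_monomial, if_neg one_ne_zero]; exact Finset.mem_singleton_self _
      obtain ⟨s, ⟨i, rfl⟩, hs⟩ := hc w hw'
      rw [Finsupp.single_le_iff] at hs
      have hval : w (kk.1 i) = rr i - 1 := by
        rw [hwapp]
        rw [Finset.sum_eq_single i]
        · rw [hdapp, if_pos (kk.2 i), Finsupp.single_apply, if_pos rfl]
        · intro j _ hj
          have h0 : d j (kk.1 i) = 0 := by
            rw [hdapp, if_neg]
            exact fun hx => (Finset.disjoint_left.mp (hdisj j i hj)) hx (kk.2 i)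
          omega
        · exact fun habs => absurd (Finset.mem_univ i) habs
      rw [hval] at hs
      have := hrr i
      omega
    exact hnotmem (hle hmem)
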